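/- If x is an element of a finite group G with p-index p^m (i.e., the p-part of |G : C_G(x)| is p^m), and P is any Sylow p-subgroup of G, then there exists a conjugate z of x such that the index |P : P ∩ C_G(z)| equals p^m. -/

import Mathlib

open Subgroup

lemma centralizer_conj_eq_map {G : Type*} [Group G] (g x : G) :
    Subgroup.centralizer {g * x * g⁻¹} =
      (Subgroup.centralizer {x}).map (MulAut.conj g).toMonoidHom := by
  ext y
  simp only [Subgroup.mem_centralizer_iff, Set.mem_singleton_iff, forall_eq, Subgroup.mem_map,
    MulEquiv.coe_toMonoidHom, MulAut.conj_apply]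
  constructor
  · intro h
    refine ⟨g⁻¹ * y * g, ?_, by group⟩
    have := congrArg (fun t => g⁻¹ * t * g) h
    simpa [mul_assoc] using this
  · rintro ⟨c, hc, rfl⟩
    have := congrArg (fun t => g * t * g⁻¹) hc
    simpa [mul_assoc] using this

theorem exists_conj_sylow_relindex_eq {G : Type*} [Group G] [Finite G] (p : ℕ)
    [Fact p.Prime] (x : G) (P : Sylow p G) (m : ℕ)
    (hm : ((Subgroup.centralizer {x}).index).factorization p = m) :
    ∃ z : G, IsConj x z ∧
      (Subgroup.centralizer {z}).relIndex (P : Subgroup G) = p ^ m := by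
  classical
  set C := Subgroup.centralizer ({x} : Set G) with hC
  obtain ⟨Q⟩ : Nonempty (Sylow p C) := inferInstance
  set QG : Subgroup G := (Q : Subgroup C).map C.subtype with hQG
  have hQGp : IsPGroup p QG := Q.2.map _
  obtain ⟨R, hQR⟩ := hQGp.exists_le_sylow
  obtain ⟨g, hg⟩ := MulAction.exists_smul_eq G R P
  refine ⟨g * x * g⁻¹, isConj_iff.mpr ⟨g, rfl⟩, ?_⟩
  set f := (MulAut.conj g).toMonoidHom with hf
  have hfinj : Function.Injective f := (MulAut.conj g).injective
  set Cz := Subgroup.centralizer ({g * x * g⁻¹} : Set G) with hCz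
  have hCzmap : Cz = C.map f := centralizer_conj_eq_map g x
  -- the conjugated Sylow of the centralizer sits inside both Cz and P
  have hsubCz : QG.map f ≤ Cz := by
    rw [hCzmap]
    exact Subgroup.map_mono (Subgroup.map_subtype_le _)
  have hsubP : QG.map f ≤ (P : Subgroup G) := by
    have h1 : QG.map f ≤ (R : Subgroup G).map f := Subgroup.map_mono hQR
    have h2 : (R : Subgroup G).map f = ((g • R : Sylow p G) : Subgroup G) :=
      (rfl :
        ((g • R : Sylow p G) : Subgroup G) = (R : Subgroup G).map f).symm
    rw [h2, hg] at h1
    exact h1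
  -- cardinalities
  have hcardC : Nat.card Cz = Nat.card C := by
    rw [hCzmap]
    exact (Nat.card_congr (C.equivMapOfInjective f hfinj).toEquiv).symm
  have hcardQG : Nat.card (QG.map f) = p ^ (Nat.card C).factorization p := by
    rw [(Nat.card_congr (QG.equivMapOfInjective f hfinj).toEquiv).symm,
      hQG, (Nat.card_congr ((Q : Subgroup C).equivMapOfInjective C.subtype
        C.subtype_injective).toEquiv).symm]
    exact Q.card_eq_multiplicity
  -- the intersection Cz ⊓ P
  set D : Subgroup G := Cz ⊓ (P : Subgroup G) with hD
  have hDle : QG.map f ≤ D := le_inf hsubCz hsubP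
  have hDp : IsPGroup p D := P.2.to_le inf_le_right
  obtain ⟨k, hk⟩ := IsPGroup.iff_card.mp hDp
  have hdvd : Nat.card D ∣ Nat.card Cz := Subgroup.card_dvd_of_le inf_le_left
  have hkle : k ≤ (Nat.card C).factorization p := by
    rw [hk, ← hcardC] at *
    have := (Nat.Prime.pow_dvd_iff_le_factorization Fact.out
      (Nat.card_pos (α := Cz)).ne').mp (hk ▸ hdvd)
    rwa [hcardC] at this
  have hgek : (Nat.card C).factorization p ≤ k := by
    have hdvd2 : Nat.card (QG.map f) ∣ Nat.card D := Subgroup.card_dvd_of_le hDle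
    rw [hcardQG, hk] at hdvd2
    exact (Nat.pow_dvd_pow_iff_le_right (Fact.out : p.Prime).one_lt).mp hdvd2
  have hcardD : Nat.card D = p ^ (Nat.card C).factorization p := by
    rw [hk, le_antisymm hkle hgek]
  -- index computation
  have hrel : Cz.relIndex (P : Subgroup G) * p ^ (Nat.card C).factorization p
      = p ^ (Nat.card G).factorization p := by
    have h1 : (Cz.subgroupOf (P : Subgroup G)).index * Nat.card (Cz.subgroupOf (P : Subgroup G))
        = Nat.card P := Subgroup.index_mul_card _
    have h2 : Nat.card (Cz.subgroupOf (P : Subgroup G)) = Nat.card D := by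
      rw [hD, ← Subgroup.inf_subgroupOf_right]
      exact Nat.card_congr (Subgroup.subgroupOfEquivOfLe inf_le_right).toEquiv
    rw [h2, hcardD, P.card_eq_multiplicity] at h1
    exact h1
  have hfacG : (Nat.card G).factorization p = (Nat.card C).factorization p + m := by
    have h3 : Nat.card C * C.index = Nat.card G := Subgroup.card_mul_index C
    have := congrArg (fun n => n.factorization p) h3
    simp only [Nat.factorization_mul (Nat.card_pos (α := C)).ne'
      (Subgroup.index_ne_zero_of_finite), Finsupp.coe_add, Pi.add_apply] at this
    rw [← this, hm]
  rw [hfacG, pow_add] at hrel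
  have hne : (p : ℕ) ^ (Nat.card C).factorization p ≠ 0 :=
    pow_ne_zero _ (Fact.out : p.Prime).pos.ne'
  exact Nat.eq_of_mul_eq_mul_right (Nat.pos_of_ne_zero hne)
    (by rw [hrel, mul_comm (p ^ (Nat.card C).factorization p)])
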